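/- For every odd prime power q, there exists κ ∈ F_{q^2} such that Tr(κa + a^{2q-1}) ≠ 0 for every nonzero a ∈ F_{q^2}, where Tr(x) = x + x^q is the relative trace from F_{q^2} to F_q. -/

import Mathlib

open Polynomial

namespace BEL

variable {F : Type*} [Field F]

/-- The relative trace map `x ↦ x + x^q` from `F_{q^2}` to `F_q`. -/
def tr (q : ℕ) (x : F) : F := x + x ^ q

/-- The Heisenberg group operation on `F_{q^2} × F_q × F_{q^2}`
(the middle coordinate is carried inside the big field). -/
def hmul (q : ℕ) (x y : F × F × F) : F × F × F :=
  (x.1 + y.1, x.2.1 + y.2.1 + tr q (x.2.2 ^ q * y.1), x.2.2 + y.2.2)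

/-- The underlying set `F_{q^2} × F_q × F_{q^2}`: triples whose middle coordinate
lies in the subfield `F_q` (fixed points of `x ↦ x^q`). -/
def carrier (q : ℕ) : Set (F × F × F) := {x | x.2.1 ^ q = x.2.1}

/-- The subgroup `A_t = {(a, a^{q+1} t, a t) : a ∈ F_{q^2}}`. -/
def A (q : ℕ) (t : F) : Set (F × F × F) := {x | ∃ a : F, x = (a, a ^ (q + 1) * t, a * t)}

/-- The subgroup `A*_t = {(a, γ, a t) : a ∈ F_{q^2}, γ ∈ F_q}`. -/
def Astar (q : ℕ) (t : F) : Set (F × F × F) :=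
  {x | ∃ a γ : F, γ ^ q = γ ∧ x = (a, γ, a * t)}

/-- The subgroup `A_∞ = {(0, 0, a) : a ∈ F_{q^2}}`. -/
def Ainf : Set (F × F × F) := {x | ∃ a : F, x = (0, 0, a)}

/-- The subgroup `A*_∞ = {(0, γ, a) : γ ∈ F_q, a ∈ F_{q^2}}`. -/
def Astarinf (q : ℕ) : Set (F × F × F) := {x | ∃ γ a : F, γ ^ q = γ ∧ x = (0, γ, a)}

/-- The family `A_i` indexed by `F_q ∪ {∞}` (`none` is `∞`). -/
def Afam (q : ℕ) : Option F → Set (F × F × F)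
  | none => Ainf
  | some t => A q t

/-- The family `A*_i` indexed by `F_q ∪ {∞}` (`none` is `∞`). -/
def Astarfam (q : ℕ) : Option F → Set (F × F × F)
  | none => Astarinf q
  | some t => Astar q t

/-- The map `τ_λ` (depending also on `κ`), written out explicitly on triples. -/
def tau (q : ℕ) (κ lam : F) (x : F × F × F) : F × F × F :=
  (x.1,
    tr q (lam * x.1 + κ * lam * x.1 ^ q + (2 : F)⁻¹ * lam ^ q * x.1 ^ 2) + x.2.1,
    lam * x.1 ^ q + x.2.2)

/-- The subgroup `A_t^λ`. -/
def Alam (q : ℕ) (κ lam t : F) : Set (F × F × F) :=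
  {x | ∃ a : F,
    x = (a,
      a ^ (q + 1) * t + tr q (lam * a + κ * lam * a ^ q + (2 : F)⁻¹ * lam ^ q * a ^ 2),
      a * t + lam * a ^ q)}


section AuxKappa
open Finset

private lemma card_rootset_le {F : Type*} [Field F] [Fintype F] [DecidableEq F]
    (P : Polynomial F) (hP : P ≠ 0) :
    (univ.filter fun x : F => P.eval x = 0).card ≤ P.natDegree := by
  refine le_trans (Finset.card_le_card fun x hx => ?_)
    (le_trans P.roots.toFinset_card_le P.card_roots')
  simp only [mem_filter, mem_univ, true_and] at hx
  simp [Multiset.mem_toFinset, Polynomial.mem_roots', hP, Polynomial.IsRoot, hx]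

private lemma arith1 {q : ℕ} (hq3 : 3 ≤ q) : (q - 1) * (q + 1) = q ^ 2 - 1 := by
  obtain ⟨m, rfl⟩ : ∃ m, q = m + 3 := ⟨q - 3, by omega⟩
  simp only [show m + 3 - 1 = m + 2 by omega]
  have h : (m + 3) ^ 2 = (m + 2) * (m + 3 + 1) + 1 := by ring
  omega

private lemma card_U {F : Type*} [Field F] [Fintype F] [DecidableEq F] {q : ℕ} (hq3 : 3 ≤ q)
    (hcard : Fintype.card F = q ^ 2) :
    (univ.filter fun u : F => u ^ (q + 1) = 1).card = q + 1 := by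
  have hupper : (univ.filter fun u : F => u ^ (q + 1) = 1).card ≤ q + 1 := by
    have h := card_rootset_le (X ^ (q + 1) - C (1 : F)) (X_pow_sub_C_ne_zero (by omega) 1)
    rw [natDegree_X_pow_sub_C] at h
    refine le_trans (card_le_card fun x hx => ?_) h
    simp only [mem_filter, mem_univ, true_and] at hx ⊢
    simp [hx, sub_eq_zero]
  have hlower : q + 1 ≤ (univ.filter fun u : F => u ^ (q + 1) = 1).card := by
    have hne : (univ.filter fun x : F => x ≠ 0).card = q ^ 2 - 1 := by
      rw [filter_ne' univ (0 : F), card_erase_of_mem (mem_univ 0), card_univ, hcard]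
    have hmap : ∀ x ∈ univ.filter fun x : F => x ≠ 0,
        x ^ (q - 1) ∈ univ.filter fun u : F => u ^ (q + 1) = 1 := by
      intro x hx
      simp only [mem_filter, mem_univ, true_and] at hx ⊢
      rw [← pow_mul, arith1 hq3, ← hcard]
      exact FiniteField.pow_card_sub_one_eq_one x hx
    have hsum := Finset.card_eq_sum_card_fiberwise hmap
    have hfib : ∀ u ∈ univ.filter fun u : F => u ^ (q + 1) = 1,
        ((univ.filter fun x : F => x ≠ 0).filter fun x => x ^ (q - 1) = u).card ≤ q - 1 := by
      intro u _
      have h := card_rootset_le (X ^ (q - 1) - C u) (X_pow_sub_C_ne_zero (by omega) u)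
      rw [natDegree_X_pow_sub_C] at h
      refine le_trans (card_le_card fun x hx => ?_) h
      simp only [mem_filter, mem_univ, true_and] at hx ⊢
      simp [hx.2, sub_eq_zero]
    have h1 : q ^ 2 - 1 ≤ (univ.filter fun u : F => u ^ (q + 1) = 1).card * (q - 1) := by
      rw [← hne, hsum]
      have := Finset.sum_le_card_nsmul _ _ (q - 1) hfib
      simpa using this
    rw [← arith1 hq3, mul_comm (q - 1) (q + 1)] at h1
    exact Nat.le_of_mul_le_mul_right h1 (by omega)
  omega

private lemma card_bad {F : Type*} [Field F] [Fintype F] [DecidableEq F] {q : ℕ} (hq3 : 3 ≤ q)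
    (φ : F →+* F) (hφ : ∀ x : F, φ x = x ^ q)
    (hcard : Fintype.card F = q ^ 2) {u : F} (hu : u ^ (q + 1) = 1) :
    (univ.filter fun κ : F => u ^ 3 + κ ^ q * u ^ 2 + κ * u + 1 = 0).card = q := by
  have hu0 : u ≠ 0 := by
    intro h; rw [h, zero_pow (by omega)] at hu; exact zero_ne_one hu
  have hqq : ∀ x : F, (x ^ q) ^ q = x := fun x => by
    rw [← pow_mul, ← sq, ← hcard, FiniteField.pow_card]
  have huq1 : u ^ q * u = 1 := by rw [← pow_succ]; exact hu
  have huqv : u ^ q = u⁻¹ := eq_inv_of_mul_eq_one_left huq1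
  set L : F → F := fun κ => κ * u + κ ^ q * u ^ 2 with hL
  have hLq : ∀ κ, (L κ) ^ q = κ ^ q * u ^ q + κ * (u ^ q) ^ 2 := by
    intro κ
    have h := (hφ (κ * u + κ ^ q * u ^ 2)).symm
    rw [map_add, map_mul, map_mul, map_pow, map_pow] at h
    simp only [hφ, hqq] at h
    exact h
  have hLsub : ∀ a b : F, L (a - b) = L a - L b := by
    intro a b
    have h : (a - b) ^ q = a ^ q - b ^ q := by rw [← hφ, ← hφ, ← hφ, map_sub]
    simp only [hL, h]; ring
  have hrange : ∀ κ, u ^ 3 * (L κ) ^ q = L κ := by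
    intro κ
    rw [hLq, huqv, hL]
    field_simp
    ring
  set Z : Finset F := univ.filter fun z : F => u ^ 3 * z ^ q = z with hZ
  have hZle : Z.card ≤ q := by
    have hP0 : (C (u ^ 3) * X ^ q - X : Polynomial F) ≠ 0 := by
      intro h
      have h1 := congrArg (fun P : Polynomial F => P.coeff 1) h
      simp only [coeff_zero] at h1
      rw [coeff_sub, coeff_C_mul, coeff_X_pow, coeff_X_one] at h1
      simp [show ¬(1 = q) by omega] at h1
    have hdeg : (C (u ^ 3) * X ^ q - X : Polynomial F).natDegree ≤ q := by
      refine le_trans (natDegree_sub_le _ _) (max_le ?_ (by simp; omega))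
      exact le_trans (natDegree_C_mul_le _ _) (by simp)
    refine le_trans (card_le_card fun z hz => ?_) (le_trans (card_rootset_le _ hP0) hdeg)
    simp only [hZ, mem_filter, mem_univ, true_and] at hz ⊢
    simp [hz, sub_eq_zero]
  set K : Finset F := univ.filter fun κ : F => L κ = 0 with hK
  have hKle : K.card ≤ q := by
    have hP0 : (C u * X + C (u ^ 2) * X ^ q : Polynomial F) ≠ 0 := by
      intro h
      have h1 := congrArg (fun P : Polynomial F => P.coeff 1) h
      simp only [coeff_zero] at h1
      rw [coeff_add, coeff_C_mul, coeff_C_mul, coeff_X_pow, coeff_X_one] at h1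
      simp [show ¬(1 = q) by omega] at h1
      exact hu0 h1
    have hdeg : (C u * X + C (u ^ 2) * X ^ q : Polynomial F).natDegree ≤ q := by
      refine le_trans (natDegree_add_le _ _) (max_le ?_ ?_)
      · exact le_trans (natDegree_C_mul_le _ _) (by simp; omega)
      · exact le_trans (natDegree_C_mul_le _ _) (by simp)
    refine le_trans (card_le_card fun z hz => ?_) (le_trans (card_rootset_le _ hP0) hdeg)
    simp only [hK, hL, mem_filter, mem_univ, true_and] at hz ⊢
    simp only [eval_add, eval_mul, eval_C, eval_X, eval_pow]
    linear_combination hz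
  have hfibK : ∀ z : F, (univ.filter fun κ : F => L κ = z).card ≤ K.card := by
    intro z
    rcases (univ.filter fun κ : F => L κ = z).eq_empty_or_nonempty with h | ⟨κ0, hκ0⟩
    · simp [h]
    · simp only [mem_filter, mem_univ, true_and] at hκ0
      refine Finset.card_le_card_of_injOn (fun κ => κ - κ0) (fun κ hκ => ?_) ?_
      · simp only [Finset.mem_coe, mem_filter, mem_univ, true_and] at hκ
        simp only [Finset.mem_coe, hK, mem_filter, mem_univ, true_and, hLsub, hκ, hκ0, sub_self]
      · intro a _ b _ h
        simpa using congrArg (· + κ0) h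
  have htot : q ^ 2 = ∑ z ∈ Z, (univ.filter fun κ : F => L κ = z).card := by
    rw [← hcard, ← Finset.card_univ]
    refine Finset.card_eq_sum_card_fiberwise fun κ _ => ?_
    simp only [Finset.mem_coe, hZ, mem_filter, mem_univ, true_and]
    exact hrange κ
  set c : F := -(1 + u ^ 3) with hc
  have hcZ : c ∈ Z := by
    simp only [hZ, mem_filter, mem_univ, true_and]
    have h1 : c ^ q = -(1 + (u ^ q) ^ 3) := by
      rw [← hφ, hc, map_neg, map_add, map_one, map_pow, hφ]
    rw [h1, huqv, hc]
    field_simp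
    ring
  have hfilter_eq : (univ.filter fun κ : F => u ^ 3 + κ ^ q * u ^ 2 + κ * u + 1 = 0)
      = univ.filter fun κ : F => L κ = c := by
    refine filter_congr fun κ _ => ?_
    simp only [hL, hc]
    constructor <;> intro h <;> linear_combination h
  have hsplit : ∑ z ∈ Z, (univ.filter fun κ : F => L κ = z).card
      = (univ.filter fun κ : F => L κ = c).card
        + ∑ z ∈ Z.erase c, (univ.filter fun κ : F => L κ = z).card :=
    (Finset.add_sum_erase _ _ hcZ).symm
  have herase : ∑ z ∈ Z.erase c, (univ.filter fun κ : F => L κ = z).card ≤ (q - 1) * q := by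
    refine le_trans (Finset.sum_le_card_nsmul _ _ q fun z _ => le_trans (hfibK z) hKle) ?_
    rw [smul_eq_mul]
    refine Nat.mul_le_mul_right q ?_
    rw [card_erase_of_mem hcZ]
    omega
  have hfc_le : (univ.filter fun κ : F => L κ = c).card ≤ q := le_trans (hfibK c) hKle
  have harith : q ^ 2 = q + (q - 1) * q := by
    obtain ⟨m, rfl⟩ : ∃ m, q = m + 3 := ⟨q - 3, by omega⟩
    simp only [show m + 3 - 1 = m + 2 by omega]
    have h : (m + 3) ^ 2 = (m + 3) + (m + 2) * (m + 3) := by ring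
    omega
  rw [hfilter_eq]
  have h1 : q + (q - 1) * q ≤ (univ.filter fun κ : F => L κ = c).card + (q - 1) * q := by
    calc q + (q - 1) * q = q ^ 2 := harith.symm
      _ = (univ.filter fun κ : F => L κ = c).card
            + ∑ z ∈ Z.erase c, (univ.filter fun κ : F => L κ = z).card := by rw [htot, hsplit]
      _ ≤ _ := Nat.add_le_add_left herase _
  exact le_antisymm hfc_le (Nat.le_of_add_le_add_right h1)

private lemma pair_exists {F : Type*} [Field F] {q : ℕ}
    (φ : F →+* F) (hφ : ∀ x : F, φ x = x ^ q)
    {u u' : F} (hu : u ^ (q + 1) = 1) (hu' : u' ^ (q + 1) = 1) (hne : u ≠ u') :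
    ∃ κ : F, (u ^ 3 + κ ^ q * u ^ 2 + κ * u + 1 = 0)
      ∧ (u' ^ 3 + κ ^ q * u' ^ 2 + κ * u' + 1 = 0) := by
  have hu0 : u ≠ 0 := by
    intro h; rw [h, zero_pow (Nat.succ_ne_zero q)] at hu; exact zero_ne_one hu
  have hu'0 : u' ≠ 0 := by
    intro h; rw [h, zero_pow (Nat.succ_ne_zero q)] at hu'; exact zero_ne_one hu'
  have huq : u ^ q = u⁻¹ := eq_inv_of_mul_eq_one_left (by rw [← pow_succ]; exact hu)
  have hu'q : u' ^ q = u'⁻¹ := eq_inv_of_mul_eq_one_left (by rw [← pow_succ]; exact hu')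
  have hsub : u' - u ≠ 0 := sub_ne_zero.mpr (Ne.symm hne)
  have hsub' : u'⁻¹ - u⁻¹ ≠ 0 := by
    rw [sub_ne_zero]
    exact fun h => hne (inv_injective h).symm
  set κ : F := (u ^ 2 * (1 + u' ^ 3) - u' ^ 2 * (1 + u ^ 3)) / (u * u' * (u' - u)) with hκ
  have hκq : κ ^ q = (u⁻¹ ^ 2 * (1 + u'⁻¹ ^ 3) - u'⁻¹ ^ 2 * (1 + u⁻¹ ^ 3))
      / (u⁻¹ * u'⁻¹ * (u'⁻¹ - u⁻¹)) := by
    rw [← hφ, hκ, map_div₀]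
    simp only [map_sub, map_mul, map_add, map_one, map_pow]
    simp only [hφ, huq, hu'q]
  have hκq2 : κ ^ q = (u' * (1 + u ^ 3) - u * (1 + u' ^ 3)) / (u * u' * (u' - u)) := by
    rw [hκq, div_eq_div_iff (mul_ne_zero (mul_ne_zero (inv_ne_zero hu0) (inv_ne_zero hu'0)) hsub')
      (mul_ne_zero (mul_ne_zero hu0 hu'0) hsub)]
    field_simp
    ring
  refine ⟨κ, ?_, ?_⟩ <;> rw [hκq2, hκ] <;> field_simp <;> ring

private lemma aux_main {F : Type*} [Field F] [Fintype F] [DecidableEq F] {q : ℕ} (hq3 : 3 ≤ q)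
    (φ : F →+* F) (hφ : ∀ x : F, φ x = x ^ q)
    (hcard : Fintype.card F = q ^ 2) :
    ∃ κ : F, ∀ u : F, u ^ (q + 1) = 1 → u ^ 3 + κ ^ q * u ^ 2 + κ * u + 1 ≠ 0 := by
  by_contra hcon
  push_neg at hcon
  set U : Finset F := univ.filter fun u : F => u ^ (q + 1) = 1 with hU
  set M : F → ℕ := fun κ => (U.filter fun u => u ^ 3 + κ ^ q * u ^ 2 + κ * u + 1 = 0).card
    with hM
  -- every κ is bad
  have hM1 : ∀ κ : F, 1 ≤ M κ := by
    intro κ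
    obtain ⟨u, hu1, hu2⟩ := hcon κ
    refine Finset.card_pos.mpr ⟨u, ?_⟩
    simp only [hU, mem_filter, mem_univ, true_and]
    exact ⟨hu1, hu2⟩
  -- M κ ≤ 3
  have hM3 : ∀ κ : F, M κ ≤ 3 := by
    intro κ
    have hdeg : (C (1:F) * X ^ 3 + C (κ ^ q) * X ^ 2 + C κ * X + C 1).natDegree = 3 :=
      natDegree_cubic one_ne_zero
    have hP0 : (C (1:F) * X ^ 3 + C (κ ^ q) * X ^ 2 + C κ * X + C 1) ≠ 0 := by
      intro h; rw [h] at hdeg; simp at hdeg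
    refine le_trans (le_trans (card_le_card fun x hx => ?_) (card_rootset_le _ hP0))
      (le_of_eq hdeg)
    simp only [hU, mem_filter, mem_univ, true_and] at hx ⊢
    simp only [eval_add, eval_mul, eval_pow, eval_C, eval_X]
    linear_combination hx.2
  -- total count
  have hS : ∑ κ : F, M κ = (q + 1) * q := by
    simp only [hM, Finset.card_filter]
    rw [Finset.sum_comm]
    have : ∀ u ∈ U, (∑ κ : F, if u ^ 3 + κ ^ q * u ^ 2 + κ * u + 1 = 0 then 1 else 0)
        = q := by
      intro u hu
      rw [← Finset.card_filter]
      simp only [hU, mem_filter, mem_univ, true_and] at hu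
      exact card_bad hq3 φ hφ hcard hu
    rw [Finset.sum_congr rfl this, Finset.sum_const, smul_eq_mul, hU,
      card_U hq3 hcard]
  -- triple set
  set T : Finset (F × F × F) := univ.filter fun t : F × F × F =>
    (t.2.1, t.2.2) ∈ U.offDiag ∧ (t.2.1 ^ 3 + t.1 ^ q * t.2.1 ^ 2 + t.1 * t.2.1 + 1 = 0)
      ∧ (t.2.2 ^ 3 + t.1 ^ q * t.2.2 ^ 2 + t.1 * t.2.2 + 1 = 0) with hT
  have hTlower : (q + 1) * q ≤ T.card := by
    have hUcard : U.card = q + 1 := card_U hq3 hcard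
    have hod : U.offDiag.card = (q + 1) * q := by
      rw [Finset.offDiag_card, hUcard]
      obtain ⟨m, rfl⟩ : ∃ m, q = m + 3 := ⟨q - 3, by omega⟩
      have h : (m + 3 + 1) * (m + 3 + 1) = (m + 3 + 1) * (m + 3) + (m + 3 + 1) := by ring
      omega
    rw [← hod]
    have hchoice : ∀ z ∈ U.offDiag, ∃ κ : F,
        (z.1 ^ 3 + κ ^ q * z.1 ^ 2 + κ * z.1 + 1 = 0)
          ∧ (z.2 ^ 3 + κ ^ q * z.2 ^ 2 + κ * z.2 + 1 = 0) := by
      intro z hz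
      rw [Finset.mem_offDiag] at hz
      obtain ⟨h1, h2, h3⟩ := hz
      simp only [hU, mem_filter, mem_univ, true_and] at h1 h2
      exact pair_exists φ hφ h1 h2 h3
    choose f hf1 hf2 using hchoice
    refine Finset.card_le_card_of_injOn (fun z => if hz : z ∈ U.offDiag then (f z hz, z) else (0, z))
      (fun z hz => ?_) (fun a ha b hb hab => ?_)
    · simp only [Finset.mem_coe] at hz; simp only [Finset.mem_coe, dif_pos hz, hT, mem_filter, mem_univ, true_and]
      exact ⟨hz, hf1 z hz, hf2 z hz⟩
    · simp only [Finset.mem_coe] at ha hb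
      simp only [dif_pos ha, dif_pos hb, Prod.mk.injEq] at hab
      exact hab.2
  have hTupper : T.card ≤ ∑ κ : F, 3 * (M κ - 1) := by
    have := Finset.card_eq_sum_card_fiberwise
      (f := fun t : F × F × F => t.1) (s := T) (t := univ) (fun t _ => mem_univ _)
    rw [this]
    refine Finset.sum_le_sum fun κ _ => ?_
    have hfib : (T.filter fun t => t.1 = κ).card
        ≤ ((U.filter fun u => u ^ 3 + κ ^ q * u ^ 2 + κ * u + 1 = 0).offDiag).card := by
      refine Finset.card_le_card_of_injOn (fun t => (t.2.1, t.2.2)) (fun t ht => ?_)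
        (fun a ha b hb hab => ?_)
      · simp only [Finset.mem_coe, hT, mem_filter, mem_univ, true_and] at ht ⊢
        obtain ⟨⟨hod, h1, h2⟩, hκ⟩ := ht
        rw [Finset.mem_offDiag] at hod ⊢
        subst hκ
        exact ⟨by simp [mem_filter, hod.1, h1], by simp [mem_filter, hod.2.1, h2], hod.2.2⟩
      · simp only [Finset.mem_coe, mem_filter] at ha hb
        obtain ⟨-, ha2⟩ := ha
        obtain ⟨-, hb2⟩ := hb
        simp only [Prod.mk.injEq] at hab
        rw [Prod.ext_iff, Prod.ext_iff]
        exact ⟨ha2.trans hb2.symm, hab.1, hab.2⟩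
    refine le_trans hfib ?_
    rw [Finset.offDiag_card]
    have h3 := hM3 κ
    have h1 := hM1 κ
    simp only [hM] at h3 h1 ⊢
    interval_cases h : (U.filter fun u => u ^ 3 + κ ^ q * u ^ 2 + κ * u + 1 = 0).card <;> simp
  have hsum3 : ∑ κ : F, 3 * (M κ - 1) = 3 * q := by
    have h1 : ∀ κ : F, M κ = (M κ - 1) + 1 := fun κ => by have := hM1 κ; omega
    have h2 : ∑ κ : F, M κ = (∑ κ : F, (M κ - 1)) + q ^ 2 := by
      rw [← hcard, ← Finset.card_univ]
      calc ∑ κ : F, M κ = ∑ κ : F, ((M κ - 1) + 1) := Finset.sum_congr rfl fun κ _ => h1 κ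
        _ = (∑ κ : F, (M κ - 1)) + (univ : Finset F).card := by
            rw [Finset.sum_add_distrib, Finset.sum_const, smul_eq_mul, mul_one]
    have h3 : ∑ κ : F, (M κ - 1) = q := by
      have harith : (q + 1) * q = q ^ 2 + q := by ring
      omega
    rw [← Finset.mul_sum, h3]
  have hfinal : (q + 1) * q ≤ 3 * q := by
    rw [← hsum3]
    exact le_trans hTlower hTupper
  have : q + 1 ≤ 3 := Nat.le_of_mul_le_mul_right hfinal (by omega)
  omega

theorem exists_kappa (p n q : ℕ) (hp : p.Prime) (hn : 0 < n)
    (hq : q = p ^ n) (hodd : Odd q)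
    (F : Type*) [Field F] [Fintype F] (hF : Fintype.card F = q ^ 2) :
    ∃ κ : F, ∀ a : F, a ≠ 0 → tr q (κ * a + a ^ (2 * q - 1)) ≠ 0 := by
  classical
  -- q is at least 3
  have hp2 : p ≠ 2 := by
    rintro rfl
    have h2 : 2 ∣ q := hq ▸ dvd_pow_self 2 hn.ne'
    rw [Nat.odd_iff] at hodd
    omega
  have hq3 : 3 ≤ q := by
    have h1 : 3 ≤ p := by have := hp.two_le; omega
    have h2 : p ≤ q := hq ▸ Nat.le_self_pow hn.ne' p
    omega
  -- characteristic
  have hchar : CharP F p := by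
    have hc0 : CharP F (ringChar F) := ringChar.charP F
    have hprime : (ringChar F).Prime := CharP.char_is_prime F _
    obtain ⟨m, -, hm2⟩ := FiniteField.card F (ringChar F)
    have hdvd : p ∣ ringChar F ^ (m : ℕ) := by
      rw [← hm2, hF, hq, ← pow_mul]
      exact dvd_pow_self p (by positivity)
    have hpr : p = ringChar F :=
      (Nat.prime_dvd_prime_iff_eq hp hprime).mp (hp.dvd_of_dvd_pow hdvd)
    rw [hpr]; exact hc0
  haveI := hchar
  haveI : Fact p.Prime := ⟨hp⟩
  set φ : F →+* F := iterateFrobenius F p n with hφdef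
  have hφ : ∀ x : F, φ x = x ^ q := fun x => by
    rw [hφdef, iterateFrobenius_def, ← hq]
  obtain ⟨κ, hκ⟩ := aux_main hq3 φ hφ hF
  refine ⟨κ, fun a ha => ?_⟩
  set u : F := a ^ (q - 1) with hudef
  have hu0 : u ≠ 0 := pow_ne_zero _ ha
  have hU : u ^ (q + 1) = 1 := by
    rw [hudef, ← pow_mul, arith1 hq3, ← hF]
    exact FiniteField.pow_card_sub_one_eq_one a ha
  have hg := hκ u hU
  have huq1 : u ^ q * u = 1 := by rw [← pow_succ]; exact hU
  have haq : a * u = a ^ q := by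
    rw [hudef, ← pow_succ']
    congr 1
    omega
  have ha2q : a ^ (2 * q - 1) = a * u ^ 2 := by
    have h1 : a ^ (2 * q - 1) * a = (a * u ^ 2) * a := by
      rw [← pow_succ, show 2 * q - 1 + 1 = q * 2 by omega, pow_mul, ← haq]
      ring
    exact mul_right_cancel₀ ha h1
  have ha2qq : (a ^ (2 * q - 1)) ^ q = a * u ^ q := by
    have h1 : (a ^ (2 * q - 1)) ^ q = a ^ q * (u ^ q) ^ 2 := by
      rw [ha2q, mul_pow, ← pow_mul, mul_comm 2 q, pow_mul]
    rw [h1, ← haq]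
    linear_combination (a * u ^ q) * huq1
  have htr : u * tr q (κ * a + a ^ (2 * q - 1))
      = a * (u ^ 3 + κ ^ q * u ^ 2 + κ * u + 1) := by
    simp only [tr]
    have hsum : (κ * a + a ^ (2 * q - 1)) ^ q = κ ^ q * a ^ q + (a ^ (2 * q - 1)) ^ q := by
      rw [← hφ, map_add, map_mul, hφ, hφ, hφ]
    rw [hsum, ha2qq, ha2q, ← haq]
    linear_combination a * huq1
  intro h0
  rw [h0, mul_zero] at htr
  exact hg ((mul_eq_zero.mp htr.symm).resolve_left ha)

end AuxKappa

end BEL
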